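/- For any prime p > 3 and integers x, y, the quantity (x+y)^p - x^p - y^p is divisible by p·x·y·(x+y)·(x^2+xy+y^2). -/

import Mathlib

open Polynomial

lemma zeta_facts : ∃ ζ : ℂ, ζ^2 + ζ + 1 = 0 ∧ ζ^3 = 1 ∧ IsPrimitiveRoot ζ 3 := by
  refine ⟨Complex.exp (2 * Real.pi * Complex.I / 3), ?_, ?_, ?_⟩
  · have h := Complex.isPrimitiveRoot_exp 3 (by norm_num)
    have h3 : (Complex.exp (2 * Real.pi * Complex.I / 3))^3 = 1 := h.pow_eq_one
    have h1 : Complex.exp (2 * Real.pi * Complex.I / 3) ≠ 1 := h.ne_one (by norm_num)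
    have : (Complex.exp (2 * Real.pi * Complex.I / 3) - 1) *
        ((Complex.exp (2 * Real.pi * Complex.I / 3))^2 + Complex.exp (2 * Real.pi * Complex.I / 3) + 1) = 0 := by
      linear_combination h3
    rcases mul_eq_zero.mp this with h' | h'
    · exact absurd (by linear_combination h') h1
    · exact h'
  · exact (Complex.isPrimitiveRoot_exp 3 (by norm_num)).pow_eq_one
  · exact Complex.isPrimitiveRoot_exp 3 (by norm_num)

lemma key (p : ℕ) (hp : p.Prime) (hp3 : 3 < p) :
    ∃ g : ℤ[X], ((X+1)^p - X^p - 1 : ℤ[X]) =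
      C (p:ℤ) * (X * ((X+1) * (X^2+X+1))) * g ∧ g.natDegree ≤ p - 5 := by
  have hp0 : (p:ℤ) ≠ 0 := by exact_mod_cast hp.ne_zero
  set h : ℤ[X] := (X+1)^p - X^p - 1 with hh
  have hpodd : Odd p := hp.odd_of_ne_two (by omega)
  have hc : ∀ N : ℕ, h.coeff N =
      (p.choose N : ℤ) - (if N = p then 1 else 0) - (if N = 0 then 1 else 0) := by
    intro N
    simp [hh, coeff_sub, coeff_X_add_one_pow, coeff_X_pow, coeff_one]
  -- step 1 : C p ∣ h
  have hCp : (C (p:ℤ)) ∣ h := by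
    rw [C_dvd_iff_dvd_coeff]
    intro i
    rw [hc i]
    rcases eq_or_ne i 0 with rfl | hi0
    · rw [if_neg (by omega : ¬ (0:ℕ) = p), if_pos rfl]
      simp
    rcases lt_trichotomy i p with hip | rfl | hip
    · rw [if_neg (by omega : ¬ i = p), if_neg hi0]
      simpa using Int.natCast_dvd_natCast.mpr (hp.dvd_choose_self hi0 hip)
    · rw [if_pos rfl, if_neg hi0, Nat.choose_self]
      simp
    · rw [Nat.choose_eq_zero_of_lt hip, if_neg (by omega : ¬ i = p), if_neg hi0]
      simp
  obtain ⟨h₁, hh₁⟩ := hCp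
  -- degree bound of h
  have hdegh : h.natDegree ≤ p - 1 := by
    rw [natDegree_le_iff_coeff_eq_zero]
    intro N hN
    rw [hc N]
    rcases eq_or_ne N p with rfl | hNp
    · rw [if_pos rfl, if_neg (by omega : ¬ N = 0), Nat.choose_self]
      simp
    · have : p < N := by omega
      rw [Nat.choose_eq_zero_of_lt this, if_neg hNp, if_neg (by omega : ¬ N = 0)]
      simp
  -- X ∣ h₁
  have hX : X ∣ h₁ := by
    rw [X_dvd_iff]
    have h0 : h.coeff 0 = 0 := by
      rw [hc 0, if_neg (by omega : ¬ (0:ℕ) = p), if_pos rfl]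
      simp
    rw [hh₁, coeff_C_mul] at h0
    exact (mul_eq_zero.mp h0).resolve_left hp0
  -- X+1 ∣ h₁
  have hX1 : (X + 1 : ℤ[X]) ∣ h₁ := by
    have : (X - C (-1 : ℤ)) ∣ h₁ := by
      rw [dvd_iff_isRoot]
      have h0 : h.eval (-1) = 0 := by
        simp [hh, hpodd.neg_one_pow, hp.ne_zero]
      rw [hh₁] at h0
      simp only [eval_mul, eval_C] at h0
      exact (mul_eq_zero.mp h0).resolve_left hp0
    simpa [map_neg, map_one, sub_neg_eq_add] using this
  -- X^2+X+1 ∣ h₁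
  have hΦ : (X^2 + X + 1 : ℤ[X]) ∣ h₁ := by
    obtain ⟨ζ, hζ, hζ3, hζprim⟩ := zeta_facts
    have hroot : aeval ζ h = 0 := by
      have hsum : ζ + 1 = -ζ^2 := by linear_combination hζ
      have hevp : aeval ζ h = (ζ+1)^p - ζ^p - 1 := by
        simp [hh]
      rw [hevp, hsum, hpodd.neg_pow]
      obtain ⟨k, r, hr, hpk⟩ : ∃ k r, (r = 1 ∨ r = 2) ∧ p = 3 * k + r := by
        refine ⟨p / 3, p % 3, ?_, (Nat.div_add_mod p 3).symm ▸ by omega⟩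
        have h3 : ¬ (3 ∣ p) := fun hd => by
          rcases (Nat.Prime.eq_one_or_self_of_dvd hp 3 hd) with h' | h' <;> omega
        omega
      have hz : ∀ n : ℕ, ζ ^ (3 * n) = 1 := fun n => by
        rw [pow_mul, hζ3, one_pow]
      rcases hr with rfl | rfl
      · have h1 : ζ ^ p = ζ := by rw [hpk, pow_add, hz, one_mul, pow_one]
        have h2 : (ζ^2) ^ p = ζ^2 := by
          rw [← pow_mul, hpk]
          have he : 2 * (3 * k + 1) = 3 * (2*k) + 2 := by ring
          rw [he, pow_add, hz, one_mul]
        rw [h1, h2]; linear_combination -hζ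
      · have h1 : ζ ^ p = ζ^2 := by rw [hpk, pow_add, hz, one_mul]
        have h2 : (ζ^2) ^ p = ζ := by
          rw [← pow_mul, hpk]
          have he : 2 * (3 * k + 2) = 3 * (2*k+1) + 1 := by ring
          rw [he, pow_add, hz, one_mul, pow_one]
        rw [h1, h2]; linear_combination -hζ
    have hroot₁ : aeval ζ h₁ = 0 := by
      rw [hh₁] at hroot
      simp only [map_mul, aeval_C] at hroot
      rcases mul_eq_zero.mp hroot with h' | h'
      · exact absurd h' (by simp [hp.ne_zero])
      · exact h'
    -- go through cyclotomic
    have hcyc : cyclotomic 3 ℚ ∣ h₁.map (algebraMap ℤ ℚ) := by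
      rw [cyclotomic_eq_minpoly_rat hζprim (by norm_num)]
      apply minpoly.dvd
      rwa [aeval_map_algebraMap]
    have hcycZ : cyclotomic 3 ℤ ∣ h₁ := by
      rw [← map_cyclotomic 3 (algebraMap ℤ ℚ)] at hcyc
      exact (map_dvd_map _ (algebraMap ℤ ℚ).injective_int (cyclotomic.monic 3 ℤ)).mp hcyc
    have h3Z : cyclotomic 3 ℤ = X^2 + X + 1 := by
      haveI : Fact (Nat.Prime 3) := ⟨by norm_num⟩
      rw [cyclotomic_prime]
      rw [Finset.sum_range_succ, Finset.sum_range_succ, Finset.sum_range_succ,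
        Finset.sum_range_zero]
      ring
    rwa [h3Z] at hcycZ
  -- combine
  have c1 : IsCoprime (X : ℤ[X]) (X+1) := ⟨-1, 1, by ring⟩
  have c2 : IsCoprime (X : ℤ[X]) (X^2+X+1) := ⟨-(X+1), 1, by ring⟩
  have c3 : IsCoprime (X+1 : ℤ[X]) (X^2+X+1) := ⟨-X, 1, by ring⟩
  have hd1 : (X+1)*(X^2+X+1) ∣ h₁ := c3.mul_dvd hX1 hΦ
  have hd2 : X * ((X+1)*(X^2+X+1)) ∣ h₁ := (c1.mul_right c2).mul_dvd hX hd1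
  obtain ⟨g, hg⟩ := hd2
  refine ⟨g, by rw [hh₁, hg]; ring, ?_⟩
  -- degree bound
  rcases eq_or_ne g 0 with rfl | hg0
  · simp
  have hXmon : (X * ((X+1)*(X^2+X+1)) : ℤ[X]).Monic := by
    monicity!
  have hXne : (X * ((X+1)*(X^2+X+1)) : ℤ[X]) ≠ 0 := hXmon.ne_zero
  have hdm : h₁.natDegree = 4 + g.natDegree := by
    rw [hg, natDegree_mul hXne hg0]
    congr 1
    compute_degree!
  have hdh₁ : h₁.natDegree ≤ p - 1 := by
    have : h.natDegree = h₁.natDegree := by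
      rw [hh₁, natDegree_C_mul hp0]
    omega
  omega

theorem stmt_2 (p : ℕ) (hp : p.Prime) (hp3 : 3 < p) (x y : ℤ) :
    (p : ℤ) * x * y * (x + y) * (x ^ 2 + x * y + y ^ 2) ∣
      (x + y) ^ p - x ^ p - y ^ p := by
  rcases eq_or_ne y 0 with rfl | hy
  · simp [zero_pow hp.ne_zero]
  obtain ⟨g, hg, hdeg⟩ := key p hp hp3
  have h4 : p ≠ 4 := by rintro rfl; norm_num at hp
  obtain ⟨m, hm⟩ : ∃ m, p = m + 5 := ⟨p - 5, by omega⟩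
  subst hm
  have hdegm : g.natDegree ≤ m := by omega
  set p := m + 5 with hm
  set G : ℤ := ∑ i ∈ Finset.range (m+1), g.coeff i * x^i * y^(m-i) with hG
  refine ⟨G, ?_⟩
  have hyQ : (y:ℚ) ≠ 0 := Int.cast_ne_zero.mpr hy
  -- evaluate the polynomial identity at x/y over ℚ
  set t : ℚ := (x:ℚ)/(y:ℚ) with ht
  set E : ℚ := (g.map (Int.castRingHom ℚ)).eval t with hE
  have hq : (t+1)^p - t^p - 1 = (p:ℚ) * (t * ((t+1) * (t^2+t+1))) * E := by
    have := congrArg (fun q : ℤ[X] => (q.map (Int.castRingHom ℚ)).eval t) hg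
    simpa [hE] using this
  -- G as y^m * E
  have hGE : (G:ℚ) = (y:ℚ)^m * E := by
    have hdlt : (g.map (Int.castRingHom ℚ)).natDegree < m + 1 :=
      lt_of_le_of_lt natDegree_map_le (by omega)
    rw [hE, eval_eq_sum_range' hdlt, Finset.mul_sum, hG]
    push_cast
    apply Finset.sum_congr rfl
    intro i hi
    have him : i ≤ m := by simp at hi; omega
    rw [coeff_map]
    have : (y:ℚ)^m = y^(m-i) * y^i := by
      rw [← pow_add]; congr 1; omega
    rw [ht, this, div_pow, eq_intCast]
    have hyi : (y:ℚ)^i ≠ 0 := pow_ne_zero _ hyQ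
    calc ((g.coeff i : ℤ) : ℚ) * (x:ℚ) ^ i * (y:ℚ) ^ (m - i)
        = ((g.coeff i : ℤ) : ℚ) * (x:ℚ) ^ i * (y:ℚ) ^ (m - i) * ((y:ℚ) ^ i / (y:ℚ) ^ i) := by
          rw [div_self hyi, mul_one]
      _ = _ := by ring
  -- main computation over ℚ
  have hmain : ((x:ℚ)+y)^p - x^p - y^p
      = (p * x * y * (x+y) * (x^2+x*y+y^2)) * G := by
    have hL : ((x:ℚ)+y)^(m+5) - x^(m+5) - y^(m+5)
        = (y:ℚ)^(m+5) * ((t+1)^(m+5) - t^(m+5) - 1) := by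
      have ht1 : t + 1 = ((x:ℚ)+y)/y := by rw [ht]; field_simp
      rw [ht1, ht, div_pow, div_pow]
      field_simp
    have hR : (y:ℚ)^(m+5) * ((p:ℚ) * (t * ((t+1)*(t^2+t+1))) * E)
        = ((p:ℚ) * x * y * (x+y) * (x^2+x*y+y^2)) * ((y:ℚ)^m * E) := by
      have ht1 : t + 1 = ((x:ℚ)+y)/y := by rw [ht]; field_simp
      rw [ht1, ht]
      field_simp
      ring
    rw [hm, hL, hq, hR, ← hGE]
  have : ((x+y)^p - x^p - y^p : ℤ) = (p * x * y * (x+y) * (x^2+x*y+y^2)) * G := by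
    exact_mod_cast hmain
  rw [this]
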